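/- Let n ≥ 3. The fixed-edge graph G₀ (the graph G(z) for z identically false) is connected and every vertex of G₀ has even degree. -/

import Mathlib

/-- The vertex `ℓ_i`, `0 ≤ i ≤ n+1`. -/
def vL {n : ℕ} (i : Fin (n + 2)) : Fin (n + 2) ⊕ Fin (n + 2) ⊕ Fin n := Sum.inl i

/-- The vertex `r_i`, `0 ≤ i ≤ n+1`. -/
def vR {n : ℕ} (i : Fin (n + 2)) : Fin (n + 2) ⊕ Fin (n + 2) ⊕ Fin n :=
  Sum.inr (Sum.inl i)

/-- The vertex `m_{j+1}`, i.e. `j : Fin n` represents the middle vertices `m_1, …, m_n`. -/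
def vM {n : ℕ} (j : Fin n) : Fin (n + 2) ⊕ Fin (n + 2) ⊕ Fin n :=
  Sum.inr (Sum.inr j)

/-- The graph `G(z)` on the `3n+4` vertices `ℓ_0, …, ℓ_{n+1}, r_0, …, r_{n+1}, m_1, …, m_n`.
Fixed edges: `{ℓ_i, ℓ_{i+1}}` and `{r_i, r_{i+1}}` for `0 ≤ i ≤ n`; `{m_j, m_{j+1}}` for
`1 ≤ j ≤ n-1`; and the five edges `{ℓ_0, m_1}`, `{r_0, m_1}`, `{ℓ_{n+1}, m_n}`,
`{r_{n+1}, m_n}`, `{m_1, m_n}`.  In addition, for every `(i, j)` with `z i j = true`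
(where `i, j : Fin n` represent indices `1, …, n`) the two edges `{ℓ_{i+1}, m_{j+1}}` and
`{r_{i+1}, m_{j+1}}`. -/
def GE (n : ℕ) (z : Fin n → Fin n → Bool) :
    SimpleGraph (Fin (n + 2) ⊕ Fin (n + 2) ⊕ Fin n) :=
  SimpleGraph.fromEdgeSet { e |
    (∃ i : Fin (n + 1), e = s(vL i.castSucc, vL i.succ)) ∨
    (∃ i : Fin (n + 1), e = s(vR i.castSucc, vR i.succ)) ∨
    (∃ j : Fin n, ∃ h : j.val + 1 < n, e = s(vM j, vM ⟨j.val + 1, h⟩)) ∨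
    (∃ h : 0 < n,
      e = s(vL 0, vM ⟨0, h⟩) ∨ e = s(vR 0, vM ⟨0, h⟩) ∨
      e = s(vL (Fin.last (n + 1)), vM ⟨n - 1, by omega⟩) ∨
      e = s(vR (Fin.last (n + 1)), vM ⟨n - 1, by omega⟩) ∨
      e = s(vM ⟨0, h⟩, vM ⟨n - 1, by omega⟩)) ∨
    (∃ i j : Fin n, z i j = true ∧
      (e = s(vL ⟨i.val + 1, by have := i.isLt; omega⟩, vM j) ∨
       e = s(vR ⟨i.val + 1, by have := i.isLt; omega⟩, vM j))) }

open SimpleGraph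
section
variable {n : ℕ}

lemma adj_iff (a b : Fin (n + 2) ⊕ Fin (n + 2) ⊕ Fin n) :
    (GE n fun _ _ => false).Adj a b ↔
      ((∃ i : Fin (n + 1), s(a,b) = s(vL i.castSucc, vL i.succ)) ∨
       (∃ i : Fin (n + 1), s(a,b) = s(vR i.castSucc, vR i.succ)) ∨
       (∃ j : Fin n, ∃ h : j.val + 1 < n, s(a,b) = s(vM j, vM ⟨j.val + 1, h⟩)) ∨
       (∃ h : 0 < n,
         s(a,b) = s(vL 0, vM ⟨0, h⟩) ∨ s(a,b) = s(vR 0, vM ⟨0, h⟩) ∨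
         s(a,b) = s(vL (Fin.last (n + 1)), vM ⟨n - 1, by omega⟩) ∨
         s(a,b) = s(vR (Fin.last (n + 1)), vM ⟨n - 1, by omega⟩) ∨
         s(a,b) = s(vM ⟨0, h⟩, vM ⟨n - 1, by omega⟩))) ∧ a ≠ b := by
  rw [GE, fromEdgeSet_adj]
  simp only [Set.mem_setOf_eq, Bool.false_eq_true, false_and, exists_false, or_false,
    exists_const]
end
section
variable {n : ℕ}

lemma adj_LL (i j : Fin (n + 2)) :
    (GE n fun _ _ => false).Adj (vL i) (vL j) ↔ (j : ℕ) = i + 1 ∨ (i : ℕ) = j + 1 := by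
  rw [adj_iff]
  constructor
  · rintro ⟨h, hne⟩
    simp [vL, vR, vM, Sym2.eq_iff, Fin.ext_iff, -Fin.val_eq_zero_iff, Fin.exists_iff] at h ⊢
    omega
  · intro h
    have hne : vL (n := n) i ≠ vL j := by simp [vL, Fin.ext_iff]; omega
    refine ⟨Or.inl ?_, hne⟩
    rcases h with h | h
    · exact ⟨⟨i, by omega⟩, by simp [vL, Sym2.eq_iff, Fin.ext_iff]; omega⟩
    · exact ⟨⟨j, by omega⟩, by simp [vL, Sym2.eq_iff, Fin.ext_iff]; omega⟩

lemma adj_RR (i j : Fin (n + 2)) :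
    (GE n fun _ _ => false).Adj (vR i) (vR j) ↔ (j : ℕ) = i + 1 ∨ (i : ℕ) = j + 1 := by
  rw [adj_iff]
  constructor
  · rintro ⟨h, hne⟩
    simp [vL, vR, vM, Sym2.eq_iff, Fin.ext_iff, -Fin.val_eq_zero_iff, Fin.exists_iff] at h ⊢
    omega
  · intro h
    have hne : vR (n := n) i ≠ vR j := by simp [vR, Fin.ext_iff]; omega
    refine ⟨Or.inr (Or.inl ?_), hne⟩
    rcases h with h | h
    · exact ⟨⟨i, by omega⟩, by simp [vR, Sym2.eq_iff, Fin.ext_iff]; omega⟩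
    · exact ⟨⟨j, by omega⟩, by simp [vR, Sym2.eq_iff, Fin.ext_iff]; omega⟩

lemma not_adj_LR (i j : Fin (n + 2)) : ¬ (GE n fun _ _ => false).Adj (vL i) (vR j) := by
  rw [adj_iff]
  rintro ⟨h, -⟩
  simp [vL, vR, vM, Sym2.eq_iff, Fin.ext_iff, -Fin.val_eq_zero_iff, Fin.exists_iff] at h

lemma adj_LM (i : Fin (n + 2)) (j : Fin n) :
    (GE n fun _ _ => false).Adj (vL i) (vM j) ↔
      ((i : ℕ) = 0 ∧ (j : ℕ) = 0) ∨ ((i : ℕ) = n + 1 ∧ (j : ℕ) = n - 1) := by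
  have hn : 0 < n := j.pos
  rw [adj_iff]
  constructor
  · rintro ⟨h, hne⟩
    simp [vL, vR, vM, Sym2.eq_iff, Fin.ext_iff, -Fin.val_eq_zero_iff, Fin.exists_iff] at h ⊢
    omega
  · intro h
    have hne : vL (n := n) i ≠ vM j := by simp [vL, vM]
    refine ⟨Or.inr (Or.inr (Or.inr ⟨hn, ?_⟩)), hne⟩
    rcases h with ⟨h1, h2⟩ | ⟨h1, h2⟩
    · exact Or.inl (by simp [vL, vM, Sym2.eq_iff, Fin.ext_iff, -Fin.val_eq_zero_iff]; omega)
    · exact Or.inr (Or.inr (Or.inl (by simp [vL, vM, Sym2.eq_iff, Fin.ext_iff, Fin.last]; omega)))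

lemma adj_RM (i : Fin (n + 2)) (j : Fin n) :
    (GE n fun _ _ => false).Adj (vR i) (vM j) ↔
      ((i : ℕ) = 0 ∧ (j : ℕ) = 0) ∨ ((i : ℕ) = n + 1 ∧ (j : ℕ) = n - 1) := by
  have hn : 0 < n := j.pos
  rw [adj_iff]
  constructor
  · rintro ⟨h, hne⟩
    simp [vL, vR, vM, Sym2.eq_iff, Fin.ext_iff, -Fin.val_eq_zero_iff, Fin.exists_iff] at h ⊢
    omega
  · intro h
    have hne : vR (n := n) i ≠ vM j := by simp [vR, vM]
    refine ⟨Or.inr (Or.inr (Or.inr ⟨hn, ?_⟩)), hne⟩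
    rcases h with ⟨h1, h2⟩ | ⟨h1, h2⟩
    · exact Or.inr (Or.inl (by simp [vR, vM, Sym2.eq_iff, Fin.ext_iff, -Fin.val_eq_zero_iff]; omega))
    · exact Or.inr (Or.inr (Or.inr (Or.inl (by simp [vR, vM, Sym2.eq_iff, Fin.ext_iff, Fin.last]; omega))))

lemma adj_MM (j k : Fin n) :
    (GE n fun _ _ => false).Adj (vM j) (vM k) ↔
      ((k : ℕ) = j + 1 ∨ (j : ℕ) = k + 1) ∨
      ((j : ℕ) = 0 ∧ (k : ℕ) = n - 1 ∧ 2 ≤ n) ∨ ((k : ℕ) = 0 ∧ (j : ℕ) = n - 1 ∧ 2 ≤ n) := by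
  have hn : 0 < n := j.pos
  rw [adj_iff]
  constructor
  · rintro ⟨h, hne⟩
    have hne' : (j : ℕ) ≠ k := by simpa [vM, Fin.ext_iff] using hne
    simp [vL, vR, vM, Sym2.eq_iff, Fin.ext_iff, Fin.exists_iff] at h ⊢
    rcases h with ⟨i, hi1, hi2, h⟩ | ⟨-, h⟩ <;> omega
  · intro h
    have hne : vM (n := n) j ≠ vM k := by simp [vM, Fin.ext_iff]; omega
    constructor
    · rcases h with (h | h) | ⟨h1, h2, h3⟩ | ⟨h1, h2, h3⟩
      · exact Or.inr (Or.inr (Or.inl ⟨j, by omega, by simp [vM, Sym2.eq_iff, Fin.ext_iff]; omega⟩))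
      · exact Or.inr (Or.inr (Or.inl ⟨k, by omega, by simp [vM, Sym2.eq_iff, Fin.ext_iff]; omega⟩))
      · exact Or.inr (Or.inr (Or.inr ⟨hn, Or.inr (Or.inr (Or.inr (Or.inr
          (by simp [vM, Sym2.eq_iff, Fin.ext_iff]; omega))))⟩))
      · exact Or.inr (Or.inr (Or.inr ⟨hn, Or.inr (Or.inr (Or.inr (Or.inr
          (by simp [vM, Sym2.eq_iff, Fin.ext_iff]; omega))))⟩))
    · exact hne

end
section
variable {n : ℕ}

lemma adj_ML (i : Fin (n + 2)) (j : Fin n) :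
    (GE n fun _ _ => false).Adj (vM j) (vL i) ↔
      ((i : ℕ) = 0 ∧ (j : ℕ) = 0) ∨ ((i : ℕ) = n + 1 ∧ (j : ℕ) = n - 1) := by
  rw [SimpleGraph.adj_comm, adj_LM]

lemma adj_MR (i : Fin (n + 2)) (j : Fin n) :
    (GE n fun _ _ => false).Adj (vM j) (vR i) ↔
      ((i : ℕ) = 0 ∧ (j : ℕ) = 0) ∨ ((i : ℕ) = n + 1 ∧ (j : ℕ) = n - 1) := by
  rw [SimpleGraph.adj_comm, adj_RM]

lemma not_adj_RL (i j : Fin (n + 2)) : ¬ (GE n fun _ _ => false).Adj (vR i) (vL j) :=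
  fun h => not_adj_LR j i h.symm

lemma even_deg_two {V : Type*} [DecidableEq V] (G : SimpleGraph V) (v a b : V)
    [inst : Fintype (G.neighborSet v)] (hab : a ≠ b)
    (h : ∀ w, G.Adj v w ↔ w = a ∨ w = b) : Even (G.degree v) := by
  have hs : G.neighborFinset v = {a, b} := by
    ext w; simp [SimpleGraph.mem_neighborFinset, h]
  show Even (G.neighborFinset v).card
  rw [hs, Finset.card_insert_of_notMem (by simpa using hab), Finset.card_singleton]
  exact ⟨1, rfl⟩

lemma even_deg_four {V : Type*} [DecidableEq V] (G : SimpleGraph V) (v a b c d : V)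
    [inst : Fintype (G.neighborSet v)]
    (hab : a ≠ b) (hac : a ≠ c) (had : a ≠ d) (hbc : b ≠ c) (hbd : b ≠ d) (hcd : c ≠ d)
    (h : ∀ w, G.Adj v w ↔ w = a ∨ w = b ∨ w = c ∨ w = d) : Even (G.degree v) := by
  have hs : G.neighborFinset v = {a, b, c, d} := by
    ext w; simp [SimpleGraph.mem_neighborFinset, h]
  show Even (G.neighborFinset v).card
  rw [hs]
  rw [Finset.card_insert_of_notMem (by simp [hab, hac, had]),
    Finset.card_insert_of_notMem (by simp [hbc, hbd]),
    Finset.card_insert_of_notMem (by simp [hcd]), Finset.card_singleton]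
  exact ⟨2, rfl⟩

lemma reach_L (hn : 3 ≤ n) (k : ℕ) (hk : k < n + 2) :
    (GE n fun _ _ => false).Reachable (vL ⟨0, by omega⟩) (vL ⟨k, hk⟩) := by
  induction k with
  | zero => exact SimpleGraph.Reachable.refl _
  | succ m ih =>
      exact (ih (by omega)).trans
        (SimpleGraph.Adj.reachable ((adj_LL _ _).mpr (Or.inl (by simp))))

lemma reach_R (hn : 3 ≤ n) (k : ℕ) (hk : k < n + 2) :
    (GE n fun _ _ => false).Reachable (vR ⟨0, by omega⟩) (vR ⟨k, hk⟩) := by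
  induction k with
  | zero => exact SimpleGraph.Reachable.refl _
  | succ m ih =>
      exact (ih (by omega)).trans
        (SimpleGraph.Adj.reachable ((adj_RR _ _).mpr (Or.inl (by simp))))

lemma reach_M (hn : 3 ≤ n) (k : ℕ) (hk : k < n) :
    (GE n fun _ _ => false).Reachable (vM ⟨0, by omega⟩) (vM ⟨k, hk⟩) := by
  induction k with
  | zero => exact SimpleGraph.Reachable.refl _
  | succ m ih =>
      exact (ih (by omega)).trans
        (SimpleGraph.Adj.reachable ((adj_MM _ _).mpr (Or.inl (Or.inl (by simp)))))

end

section
variable {n : ℕ}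
lemma adj_LL' (i j : Fin (n + 2)) :
    (GE n fun _ _ => false).Adj (Sum.inl i) (Sum.inl j) ↔ (j : ℕ) = i + 1 ∨ (i : ℕ) = j + 1 :=
  adj_LL i j
lemma adj_RR' (i j : Fin (n + 2)) :
    (GE n fun _ _ => false).Adj (Sum.inr (Sum.inl i)) (Sum.inr (Sum.inl j)) ↔
      (j : ℕ) = i + 1 ∨ (i : ℕ) = j + 1 := adj_RR i j
lemma not_adj_LR' (i j : Fin (n + 2)) :
    ¬ (GE n fun _ _ => false).Adj (Sum.inl i) (Sum.inr (Sum.inl j)) := not_adj_LR i j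
lemma not_adj_RL' (i j : Fin (n + 2)) :
    ¬ (GE n fun _ _ => false).Adj (Sum.inr (Sum.inl i)) (Sum.inl j) := not_adj_RL i j
lemma adj_LM' (i : Fin (n + 2)) (j : Fin n) :
    (GE n fun _ _ => false).Adj (Sum.inl i) (Sum.inr (Sum.inr j)) ↔
      ((i : ℕ) = 0 ∧ (j : ℕ) = 0) ∨ ((i : ℕ) = n + 1 ∧ (j : ℕ) = n - 1) := adj_LM i j
lemma adj_RM' (i : Fin (n + 2)) (j : Fin n) :
    (GE n fun _ _ => false).Adj (Sum.inr (Sum.inl i)) (Sum.inr (Sum.inr j)) ↔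
      ((i : ℕ) = 0 ∧ (j : ℕ) = 0) ∨ ((i : ℕ) = n + 1 ∧ (j : ℕ) = n - 1) := adj_RM i j
lemma adj_ML' (i : Fin (n + 2)) (j : Fin n) :
    (GE n fun _ _ => false).Adj (Sum.inr (Sum.inr j)) (Sum.inl i) ↔
      ((i : ℕ) = 0 ∧ (j : ℕ) = 0) ∨ ((i : ℕ) = n + 1 ∧ (j : ℕ) = n - 1) := adj_ML i j
lemma adj_MR' (i : Fin (n + 2)) (j : Fin n) :
    (GE n fun _ _ => false).Adj (Sum.inr (Sum.inr j)) (Sum.inr (Sum.inl i)) ↔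
      ((i : ℕ) = 0 ∧ (j : ℕ) = 0) ∨ ((i : ℕ) = n + 1 ∧ (j : ℕ) = n - 1) := adj_MR i j
lemma adj_MM' (j k : Fin n) :
    (GE n fun _ _ => false).Adj (Sum.inr (Sum.inr j)) (Sum.inr (Sum.inr k)) ↔
      ((k : ℕ) = j + 1 ∨ (j : ℕ) = k + 1) ∨
      ((j : ℕ) = 0 ∧ (k : ℕ) = n - 1 ∧ 2 ≤ n) ∨ ((k : ℕ) = 0 ∧ (j : ℕ) = n - 1 ∧ 2 ≤ n) :=
  adj_MM j k
end

theorem GE_fixed_connected_and_even_degree (n : ℕ) (hn : 3 ≤ n) :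
    (GE n fun _ _ => false).Connected ∧
      ∀ v : Fin (n + 2) ⊕ Fin (n + 2) ⊕ Fin n,
        haveI : Fintype ((GE n fun _ _ => false).neighborSet v) := Fintype.ofFinite _
        Even ((GE n fun _ _ => false).degree v) := by
  constructor
  · rw [SimpleGraph.connected_iff_exists_forall_reachable]
    refine ⟨vM ⟨0, by omega⟩, ?_⟩
    have hL0 : (GE n fun _ _ => false).Reachable (vM ⟨0, by omega⟩) (vL ⟨0, by omega⟩) :=
      SimpleGraph.Adj.reachable ((adj_ML _ _).mpr (Or.inl ⟨rfl, rfl⟩))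
    have hR0 : (GE n fun _ _ => false).Reachable (vM ⟨0, by omega⟩) (vR ⟨0, by omega⟩) :=
      SimpleGraph.Adj.reachable ((adj_MR _ _).mpr (Or.inl ⟨rfl, rfl⟩))
    rintro (k | k | j)
    · obtain ⟨k, hk⟩ := k
      exact hL0.trans (reach_L hn k hk)
    · obtain ⟨k, hk⟩ := k
      exact hR0.trans (reach_R hn k hk)
    · obtain ⟨j, hj⟩ := j
      exact reach_M hn j hj
  · rintro (⟨k, hk⟩ | ⟨k, hk⟩ | ⟨j, hj⟩)
    · by_cases hk0 : k = 0
      · refine even_deg_two (inst := Fintype.ofFinite _) _ _ (vL ⟨1, by omega⟩) (vM ⟨0, by omega⟩) (by simp [vL, vM]) ?_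
        rintro (i | i | m) <;>
          simp [adj_LL', not_adj_LR', adj_LM', vL, vM, vR, Fin.ext_iff, -Fin.val_eq_zero_iff, hk0] <;> omega
      · by_cases hk1 : k = n + 1
        · refine even_deg_two (inst := Fintype.ofFinite _) _ _ (vL ⟨n, by omega⟩) (vM ⟨n - 1, by omega⟩)
            (by simp [vL, vM]) ?_
          rintro (i | i | m) <;>
            simp [adj_LL', not_adj_LR', adj_LM', vL, vM, vR, Fin.ext_iff, hk1] <;> omega
        · refine even_deg_two (inst := Fintype.ofFinite _) _ _ (vL ⟨k - 1, by omega⟩) (vL ⟨k + 1, by omega⟩)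
            (by simp [vL, Fin.ext_iff]) ?_
          rintro (i | i | m) <;>
            simp [adj_LL', not_adj_LR', adj_LM', vL, vM, vR, Fin.ext_iff] <;> omega
    · by_cases hk0 : k = 0
      · refine even_deg_two (inst := Fintype.ofFinite _) _ _ (vR ⟨1, by omega⟩) (vM ⟨0, by omega⟩) (by simp [vR, vM]) ?_
        rintro (i | i | m) <;>
          simp [adj_RR', not_adj_RL', adj_RM', vL, vM, vR, Fin.ext_iff, -Fin.val_eq_zero_iff, hk0] <;> omega
      · by_cases hk1 : k = n + 1
        · refine even_deg_two (inst := Fintype.ofFinite _) _ _ (vR ⟨n, by omega⟩) (vM ⟨n - 1, by omega⟩)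
            (by simp [vR, vM]) ?_
          rintro (i | i | m) <;>
            simp [adj_RR', not_adj_RL', adj_RM', vL, vM, vR, Fin.ext_iff, hk1] <;> omega
        · refine even_deg_two (inst := Fintype.ofFinite _) _ _ (vR ⟨k - 1, by omega⟩) (vR ⟨k + 1, by omega⟩)
            (by simp [vR, Fin.ext_iff]) ?_
          rintro (i | i | m) <;>
            simp [adj_RR', not_adj_RL', adj_RM', vL, vM, vR, Fin.ext_iff] <;> omega
    · by_cases hj0 : j = 0
      · refine even_deg_four (inst := Fintype.ofFinite _) _ _ (vM ⟨1, by omega⟩) (vL ⟨0, by omega⟩) (vR ⟨0, by omega⟩)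
          (vM ⟨n - 1, by omega⟩) (by simp [vL, vM]) (by simp [vR, vM])
          (by simp [vM, Fin.ext_iff]; omega) (by simp [vL, vR]) (by simp [vL, vM])
          (by simp [vR, vM]) ?_
        rintro (i | i | m) <;>
          simp [adj_MM', adj_ML', adj_MR', vL, vM, vR, Fin.ext_iff, -Fin.val_eq_zero_iff, hj0] <;> omega
      · by_cases hj1 : j = n - 1
        · refine even_deg_four (inst := Fintype.ofFinite _) _ _ (vM ⟨n - 2, by omega⟩) (vL ⟨n + 1, by omega⟩)
            (vR ⟨n + 1, by omega⟩) (vM ⟨0, by omega⟩) (by simp [vL, vM]) (by simp [vR, vM])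
            (by simp [vM, Fin.ext_iff]; omega) (by simp [vL, vR]) (by simp [vL, vM])
            (by simp [vR, vM]) ?_
          rintro (i | i | m) <;>
            simp [adj_MM', adj_ML', adj_MR', vL, vM, vR, Fin.ext_iff, -Fin.val_eq_zero_iff, Fin.last, hj1] <;> omega
        · refine even_deg_two (inst := Fintype.ofFinite _) _ _ (vM ⟨j - 1, by omega⟩) (vM ⟨j + 1, by omega⟩)
            (by simp [vM, Fin.ext_iff]) ?_
          rintro (i | i | m) <;>
            simp [adj_MM', adj_ML', adj_MR', vL, vM, vR, Fin.ext_iff, -Fin.val_eq_zero_iff] <;> omega
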